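/- For any linear order Ω, the relation ≺ is a strict linear order on ε_Ω: it is irreflexive, transitive, and for all s,t ∈ ε_Ω exactly one of s ≺ t, s = t, t ≺ s holds. -/

import Mathlib

/-- Terms for `ε_Ω`: either `ε_α` for `α ∈ Ω`, or a finite list (Cantor normal form). -/
inductive ET (Ω : Type*) where
  | eps : Ω → ET Ω
  | lst : List (ET Ω) → ET Ω

namespace ET

/-- The relation `≺` on terms. -/
def lt {Ω : Type*} [LT Ω] : ET Ω → ET Ω → Prop
  | .eps α, .eps β => α < β
  | .eps _, .lst [] => False
  | .eps α, .lst (t :: _) => lt (.eps α) t ∨ ET.eps α = t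
  | .lst [], .eps _ => True
  | .lst (s :: _), .eps β => lt s (.eps β)
  | .lst ss, .lst ts =>
      (ss.length < ts.length ∧
        ∀ i (h₁ : i < ss.length) (h₂ : i < ts.length), ss[i] = ts[i]) ∨
      ∃ j, ∃ h₁ : j < ss.length, ∃ h₂ : j < ts.length,
        lt ss[j] ts[j] ∧ ∀ i (hi : i < j), ss[i]'(by omega) = ts[i]'(by omega)
termination_by s t => sizeOf s + sizeOf t
decreasing_by
  all_goals simp_wf
  · omega
  · omega
  · have g1 := List.sizeOf_lt_of_mem (ss.getElem_mem h₁)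
    have g2 := List.sizeOf_lt_of_mem (ts.getElem_mem h₂)
    omega

/-- Well-formedness: membership in `ε_Ω`. -/
def WF {Ω : Type*} [LT Ω] : ET Ω → Prop
  | .eps _ => True
  | .lst ts => (∀ t, t ∈ ts → WF t) ∧
      (if ts.length = 1 then ∀ α, ts ≠ [ET.eps α]
       else ts.Chain' (fun a b => lt b a ∨ b = a))
termination_by t => sizeOf t
decreasing_by
  simp_wf
  have := List.sizeOf_lt_of_mem ‹t ∈ ts›
  omega

/-- The invariant `e`. -/
def e {Ω : Type*} [Bot Ω] : ET Ω → Ω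
  | .eps α => α
  | .lst [] => ⊥
  | .lst (t :: _) => e t

/-- The invariant `d`. -/
def d {Ω : Type*} : ET Ω → ℕ
  | .eps _ => 0
  | .lst [] => 0
  | .lst (t :: _) => d t + 1

end ET

section LLT
variable {α : Type*} (r : α → α → Prop)

def llt (ss ts : List α) : Prop :=
  (ss.length < ts.length ∧
    ∀ i (h₁ : i < ss.length) (h₂ : i < ts.length), ss[i] = ts[i]) ∨
  ∃ j, ∃ h₁ : j < ss.length, ∃ h₂ : j < ts.length,
    r ss[j] ts[j] ∧ ∀ i (hi : i < j), ss[i]'(by omega) = ts[i]'(by omega)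

theorem lt_lst_lst {Ω : Type*} [LT Ω] (ss ts : List (ET Ω)) :
    ET.lt (.lst ss) (.lst ts) = llt ET.lt ss ts := by
  rw [ET.lt]; rfl

variable {r}

theorem llt_nil_right (ss : List α) : ¬ llt r ss [] := by
  rintro (⟨h, -⟩ | ⟨j, h₁, h₂, -⟩) <;> simp at *

theorem llt_nil_left (ts : List α) (h : ts ≠ []) : llt r [] ts := by
  left; constructor
  · simpa using List.length_pos_iff.mpr h
  · intro i h₁ h₂; simp at h₁

theorem llt_cons {a b : α} {ss ts : List α} :
    llt r (a :: ss) (b :: ts) ↔ r a b ∨ (a = b ∧ llt r ss ts) := by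
  constructor
  · rintro (⟨hl, he⟩ | ⟨j, h₁, h₂, hr, he⟩)
    · right
      refine ⟨by exact he 0 (by simp) (by simp), Or.inl ⟨by simpa using hl, ?_⟩⟩
      intro i hi₁ hi₂
      exact he (i+1) (by simpa using hi₁) (by simpa using hi₂)
    · match j, h₁, h₂ with
      | 0, _, _ => exact Or.inl (by simpa using hr)
      | (k+1), h₁, h₂ =>
        right
        refine ⟨by simpa using he 0 (by omega), Or.inr ⟨k, by simpa using h₁, by simpa using h₂,
          by simpa using hr, ?_⟩⟩
        intro i hi
        simpa using he (i+1) (by omega)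
  · rintro (h | ⟨rfl, (⟨hl, he⟩ | ⟨j, h₁, h₂, hr, he⟩)⟩)
    · exact Or.inr ⟨0, by simp, by simp, by simpa using h, by omega⟩
    · left
      refine ⟨by simpa using hl, ?_⟩
      intro i hi₁ hi₂
      match i with
      | 0 => simp
      | (k+1) => simpa using he k (by simpa using hi₁) (by simpa using hi₂)
    · right
      refine ⟨j+1, by simpa using h₁, by simpa using h₂, by simpa using hr, ?_⟩
      intro i hi
      match i with
      | 0 => simp
      | (k+1) => simpa using he k (by omega)

theorem llt_irrefl : ∀ ss : List α, (∀ a ∈ ss, ¬ r a a) → ¬ llt r ss ss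
  | [], _ => llt_nil_right []
  | (a :: ss), h => by
    rw [llt_cons]
    rintro (hr | ⟨-, hl⟩)
    · exact h a (by simp) hr
    · exact llt_irrefl ss (fun x hx => h x (by simp [hx])) hl

theorem llt_trans : ∀ l₁ l₂ l₃ : List α,
    (∀ a ∈ l₁, ∀ b ∈ l₂, ∀ c ∈ l₃, r a b → r b c → r a c) →
    llt r l₁ l₂ → llt r l₂ l₃ → llt r l₁ l₃
  | _, [], _, _, h12, _ => absurd h12 (llt_nil_right _)
  | _, _, [], _, _, h23 => absurd h23 (llt_nil_right _)
  | [], (b :: l₂), (c :: l₃), _, _, _ => llt_nil_left _ (by simp)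
  | (a :: l₁), (b :: l₂), (c :: l₃), h, h12, h23 => by
    rw [llt_cons] at h12 h23 ⊢
    rcases h12 with hab | ⟨rfl, h12⟩
    · rcases h23 with hbc | ⟨rfl, h23⟩
      · exact Or.inl (h a (by simp) b (by simp) c (by simp) hab hbc)
      · exact Or.inl hab
    · rcases h23 with hbc | ⟨rfl, h23⟩
      · exact Or.inl hbc
      · refine Or.inr ⟨rfl, llt_trans l₁ l₂ l₃ ?_ h12 h23⟩
        exact fun x hx y hy z hz => h x (by simp [hx]) y (by simp [hy]) z (by simp [hz])

theorem llt_trich : ∀ ss ts : List α,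
    (∀ a ∈ ss, ∀ b ∈ ts, (r a b ∧ ¬ a = b ∧ ¬ r b a) ∨ (¬ r a b ∧ a = b ∧ ¬ r b a) ∨
      (¬ r a b ∧ ¬ a = b ∧ r b a)) →
    (llt r ss ts ∧ ¬ ss = ts ∧ ¬ llt r ts ss) ∨
    (¬ llt r ss ts ∧ ss = ts ∧ ¬ llt r ts ss) ∨
    (¬ llt r ss ts ∧ ¬ ss = ts ∧ llt r ts ss)
  | [], [], _ => Or.inr (Or.inl ⟨llt_nil_right _, rfl, llt_nil_right _⟩)
  | [], (b :: ts), _ => Or.inl ⟨llt_nil_left _ (by simp), by simp, llt_nil_right _⟩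
  | (a :: ss), [], _ => Or.inr (Or.inr ⟨llt_nil_right _, by simp, llt_nil_left _ (by simp)⟩)
  | (a :: ss), (b :: ts), h => by
    rcases h a (by simp) b (by simp) with ⟨h1, h2, h3⟩ | ⟨h1, h2, h3⟩ | ⟨h1, h2, h3⟩
    · refine Or.inl ⟨llt_cons.mpr (Or.inl h1), by simp [h2], ?_⟩
      rw [llt_cons]
      rintro (hba | ⟨hba, -⟩)
      · exact h3 hba
      · exact h2 hba.symm
    · subst h2
      have ih := llt_trich ss ts (fun x hx y hy => h x (by simp [hx]) y (by simp [hy]))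
      rcases ih with ⟨g1, g2, g3⟩ | ⟨g1, g2, g3⟩ | ⟨g1, g2, g3⟩
      · exact Or.inl ⟨llt_cons.mpr (Or.inr ⟨rfl, g1⟩), by simp [g2],
          fun hh => (llt_cons.mp hh).elim h3 (fun p => g3 p.2)⟩
      · exact Or.inr (Or.inl ⟨fun hh => (llt_cons.mp hh).elim h1 (fun p => g1 p.2), by simp [g2],
          fun hh => (llt_cons.mp hh).elim h3 (fun p => g3 p.2)⟩)
      · exact Or.inr (Or.inr ⟨fun hh => (llt_cons.mp hh).elim h1 (fun p => g1 p.2), by simp [g2],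
          llt_cons.mpr (Or.inr ⟨rfl, g3⟩)⟩)
    · refine Or.inr (Or.inr ⟨?_, by simp [h2], llt_cons.mpr (Or.inl h3)⟩)
      rw [llt_cons]
      rintro (hab | ⟨hab, -⟩)
      · exact h1 hab
      · exact h2 hab
end LLT
namespace ET
variable {Ω : Type*} [LinearOrder Ω]

theorem tri : ∀ s t : ET Ω,
    (lt s t ∧ ¬ s = t ∧ ¬ lt t s) ∨ (¬ lt s t ∧ s = t ∧ ¬ lt t s) ∨
    (¬ lt s t ∧ ¬ s = t ∧ lt t s)
  | .eps α, .eps β => by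
    rcases lt_trichotomy α β with h | h | h
    · exact Or.inl ⟨by rw [lt]; exact h, by simp [h.ne], by rw [lt]; exact h.asymm⟩
    · exact Or.inr (Or.inl ⟨by rw [lt]; simp [h], by simp [h], by rw [lt]; simp [h]⟩)
    · exact Or.inr (Or.inr ⟨by rw [lt]; exact h.asymm, by simp [h.ne'], by rw [lt]; exact h⟩)
  | .eps α, .lst [] => Or.inr (Or.inr ⟨by rw [lt]; exact id, by simp, by rw [lt]; trivial⟩)
  | .eps α, .lst (t :: ts) => by
    have ih := tri (.eps α) t
    rcases ih with ⟨h1, h2, h3⟩ | ⟨h1, h2, h3⟩ | ⟨h1, h2, h3⟩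
    · exact Or.inl ⟨by rw [lt]; exact Or.inl h1, by simp, by rw [lt]; exact h3⟩
    · exact Or.inl ⟨by rw [lt]; exact Or.inr h2, by simp, by rw [lt]; exact h3⟩
    · refine Or.inr (Or.inr ⟨?_, by simp, by rw [lt]; exact h3⟩)
      rw [lt]
      rintro (h | h)
      · exact h1 h
      · exact h2 h
  | .lst [], .eps β => Or.inl ⟨by rw [lt]; trivial, by simp, by rw [lt]; exact id⟩
  | .lst (s :: ss), .eps β => by
    have ih := tri s (.eps β)
    rcases ih with ⟨h1, h2, h3⟩ | ⟨h1, h2, h3⟩ | ⟨h1, h2, h3⟩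
    · refine Or.inl ⟨by rw [lt]; exact h1, by simp, ?_⟩
      rw [lt]
      rintro (h | h)
      · exact h3 h
      · exact h2 h.symm
    · exact Or.inr (Or.inr ⟨by rw [lt]; exact h1, by simp, by rw [lt]; exact Or.inr h2.symm⟩)
    · exact Or.inr (Or.inr ⟨by rw [lt]; exact h1, by simp, by rw [lt]; exact Or.inl h3⟩)
  | .lst ss, .lst ts => by
    have h : ∀ a ∈ ss, ∀ b ∈ ts, (lt a b ∧ ¬ a = b ∧ ¬ lt b a) ∨ (¬ lt a b ∧ a = b ∧ ¬ lt b a) ∨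
        (¬ lt a b ∧ ¬ a = b ∧ lt b a) := fun a ha b hb =>
      have : sizeOf a < sizeOf ss := List.sizeOf_lt_of_mem ha
      have : sizeOf b < sizeOf ts := List.sizeOf_lt_of_mem hb
      tri a b
    have := llt_trich ss ts h
    rw [lt_lst_lst, lt_lst_lst]
    simpa using this
termination_by s t => sizeOf s + sizeOf t
decreasing_by all_goals (simp_wf; omega)

theorem lt_trans' : ∀ r s t : ET Ω, lt r s → lt s t → lt r t
  | .eps α, .eps β, .eps γ, h1, h2 => by
    rw [lt] at h1 h2 ⊢; exact h1.trans h2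
  | _, .eps β, .lst [] , _, h2 => by rw [lt] at h2; exact h2.elim
  | _, .lst ss, .lst [], _, h2 => by
    rw [lt_lst_lst] at h2; exact (llt_nil_right ss h2).elim
  | .eps α, .eps β, .lst (t :: ts), h1, h2 => by
    rw [lt] at h1; rw [lt] at h2; rw [lt]
    rcases h2 with h2 | h2
    · exact Or.inl (lt_trans' _ _ _ (by rw [lt]; exact h1) h2)
    · exact Or.inl (h2 ▸ (by rw [lt]; exact h1))
  | .eps α, .lst [], t, h1, _ => by rw [lt] at h1; exact h1.elim
  | .eps α, .lst (s :: ss), .eps γ, h1, h2 => by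
    rw [lt] at h1; rw [lt] at h2
    rcases h1 with h1 | h1
    · exact lt_trans' _ _ _ h1 h2
    · exact h1 ▸ h2
  | .eps α, .lst (s :: ss), .lst (t :: ts), h1, h2 => by
    rw [lt] at h1 ⊢
    rw [lt_lst_lst, llt_cons] at h2
    rcases h2 with h2 | ⟨h2, -⟩
    · rcases h1 with h1 | h1
      · exact Or.inl (lt_trans' _ _ _ h1 h2)
      · exact Or.inl (h1 ▸ h2)
    · exact h2 ▸ h1
  | .lst [], .eps β, .eps γ, _, _ => by rw [lt]; trivial
  | .lst (s :: ss), .eps β, .eps γ, h1, h2 => by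
    rw [lt] at h1; rw [lt] at h2; rw [lt]
    exact lt_trans' _ _ _ h1 (by rw [lt]; exact h2)
  | .lst [], .eps β, .lst (t :: ts), _, _ => by
    rw [lt_lst_lst]; exact llt_nil_left _ (by simp)
  | .lst (s :: ss), .eps β, .lst (t :: ts), h1, h2 => by
    rw [lt] at h1; rw [lt] at h2
    rw [lt_lst_lst, llt_cons]
    rcases h2 with h2 | h2
    · exact Or.inl (lt_trans' _ _ _ h1 h2)
    · exact Or.inl (h2 ▸ h1)
  | .lst [], .lst (t :: ts), .eps γ, _, _ => by rw [lt]; trivial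
  | .lst ss, .lst [], .eps γ, h1, _ => by
    rw [lt_lst_lst] at h1; exact (llt_nil_right ss h1).elim
  | .lst (s :: ss), .lst (t :: ts), .eps γ, h1, h2 => by
    rw [lt_lst_lst, llt_cons] at h1
    rw [lt] at h2; rw [lt]
    rcases h1 with h1 | ⟨h1, -⟩
    · exact lt_trans' _ _ _ h1 h2
    · exact h1 ▸ h2
  | .lst ss, .lst ts, .lst us, h1, h2 => by
    rw [lt_lst_lst] at h1 h2 ⊢
    refine llt_trans ss ts us ?_ h1 h2
    intro a ha b hb c hc
    have : sizeOf a < sizeOf ss := List.sizeOf_lt_of_mem ha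
    have : sizeOf b < sizeOf ts := List.sizeOf_lt_of_mem hb
    have : sizeOf c < sizeOf us := List.sizeOf_lt_of_mem hc
    exact lt_trans' a b c
termination_by r s t => sizeOf r + sizeOf s + sizeOf t
decreasing_by all_goals (simp_wf; omega)

end ET


theorem stmt12 {Ω : Type*} [LinearOrder Ω] :
    (∀ s : ET Ω, ET.WF s → ¬ ET.lt s s) ∧
    (∀ r s t : ET Ω, ET.WF r → ET.WF s → ET.WF t →
      ET.lt r s → ET.lt s t → ET.lt r t) ∧
    (∀ s t : ET Ω, ET.WF s → ET.WF t →
      (ET.lt s t ∧ ¬ s = t ∧ ¬ ET.lt t s) ∨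
      (¬ ET.lt s t ∧ s = t ∧ ¬ ET.lt t s) ∨
      (¬ ET.lt s t ∧ ¬ s = t ∧ ET.lt t s)) := by
  refine ⟨fun s _ => ?_, fun r s t _ _ _ => ET.lt_trans' r s t, fun s t _ _ => ET.tri s t⟩
  rcases ET.tri s s with ⟨-, h, -⟩ | ⟨h, -, -⟩ | ⟨-, h, -⟩
  · exact absurd rfl h
  · exact h
  · exact absurd rfl h
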